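/- Let [H,G] be a Boolean interval of finite groups of rank n+1 with atoms and complements, and let V be a finite-dimensional complex representation of G. If H is strictly contained in the pointwise stabilizer G_{(V^H)}, then the alternating sum ∑_{K ∈ [H,G]} μ(H,K)·dim(V^K) equals 0, where μ is the Möbius function of the interval. -/

import Mathlib

/-- The fixed-point subspace `V^H` of a representation. -/
def Representation.fixedBy {G V : Type*} [Group G] [AddCommGroup V] [Module ℂ V]
    (ρ : Representation ℂ G V) (H : Subgroup G) : Submodule ℂ V where
  carrier := {v : V | ∀ h ∈ H, ρ h v = v}
  zero_mem' := by intro h _; simp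
  add_mem' := by
    intro a b ha hb h hh
    simp [map_add, ha h hh, hb h hh]
  smul_mem' := by
    intro c a ha h hh
    simp [map_smul, ha h hh]

/-- The pointwise stabilizer `G_{(X)}` of a set of vectors. -/
def Representation.pointwiseStabilizer {G V : Type*} [Group G] [AddCommGroup V] [Module ℂ V]
    (ρ : Representation ℂ G V) (X : Set V) : Subgroup G where
  carrier := {g : G | ∀ x ∈ X, ρ g x = x}
  one_mem' := by intro x _; simp
  mul_mem' := by
    intro a b ha hb x hx
    simp [map_mul, Module.End.mul_apply, hb x hx, ha x hx]
  inv_mem' := by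
    intro a ha x hx
    have h1 : ρ a⁻¹ (ρ a x) = x := by
      rw [← Module.End.mul_apply, ← map_mul, inv_mul_cancel, map_one, Module.End.one_apply]
    calc ρ a⁻¹ x = ρ a⁻¹ (ρ a x) := by rw [ha x hx]
    _ = x := h1

namespace Representation

variable {G V : Type*} [Group G] [AddCommGroup V] [Module ℂ V] (ρ : Representation ℂ G V)

theorem mem_fixedBy' {v : V} {K : Subgroup G} : v ∈ ρ.fixedBy K ↔ ∀ h ∈ K, ρ h v = v := Iff.rfl

theorem fixedBy_anti {K K' : Subgroup G} (h : K ≤ K') : ρ.fixedBy K' ≤ ρ.fixedBy K :=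
  fun _ hv k hk => hv k (h hk)

theorem fixedBy_sup_stabilizer {H K : Subgroup G} (hHK : H ≤ K) :
    ρ.fixedBy (K ⊔ ρ.pointwiseStabilizer (ρ.fixedBy H : Set V)) = ρ.fixedBy K := by
  refine le_antisymm (ρ.fixedBy_anti le_sup_left) fun v hv => ?_
  intro h hh
  have h1 : K ⊔ ρ.pointwiseStabilizer (ρ.fixedBy H : Set V) ≤
      ρ.pointwiseStabilizer ({v} : Set V) := by
    refine sup_le (fun g hg => ?_) (fun g hg => ?_)
    · intro x hx
      rw [Set.mem_singleton_iff] at hx; rw [hx]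
      exact hv g hg
    · intro x hx
      rw [Set.mem_singleton_iff] at hx; rw [hx]
      exact hg v (fun k hk => hv k (hHK hk))
  exact h1 hh v rfl

end Representation

/-- If `[H,G]` is Boolean and `H` is strictly contained in the pointwise stabilizer of
`V^H`, then `∑_{K ∈ [H,G]} μ(H,K)·dim(V^K) = 0`. Here `μ` is the Möbius function of the
interval `[H,G]`, characterized by `μ(H,H) = 1` and `∑_{L ∈ [H,K]} μ(H,L) = 0` for
`H < K`. -/
theorem sum_mobius_mul_dim_fixed_eq_zero (G : Type) [Group G] [Fintype G]
    (V : Type) [AddCommGroup V] [Module ℂ V] [FiniteDimensional ℂ V]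
    (ρ : Representation ℂ G V) (H : Subgroup G)
    (hBool : ∃ n : ℕ, Nonempty ((Set.Icc H (⊤ : Subgroup G)) ≃o Set (Fin n)))
    (μ : Subgroup G → ℤ) (hμH : μ H = 1)
    (hμ : ∀ K : Subgroup G, H < K → ∑ᶠ L ∈ Set.Icc H K, μ L = 0)
    (hlt : H < ρ.pointwiseStabilizer (ρ.fixedBy H : Set V)) :
    ∑ᶠ K ∈ Set.Icc H (⊤ : Subgroup G),
      μ K * (Module.finrank ℂ (ρ.fixedBy K) : ℤ) = 0 := by
  classical
  obtain ⟨n, ⟨e⟩⟩ := hBool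
  set S := ρ.pointwiseStabilizer (ρ.fixedBy H : Set V) with hSdef
  let σ : Finset (Fin n) ≃o (Set.Icc H (⊤ : Subgroup G)) :=
    Fintype.finsetOrderIsoSet.trans e.symm
  let ι : Finset (Fin n) → Subgroup G := fun A => ((σ A : Set.Icc H (⊤ : Subgroup G)) : Subgroup G)
  have hinj : Function.Injective ι := fun A B h => σ.injective (Subtype.ext h)
  have hmem : ∀ A, ι A ∈ Set.Icc H (⊤ : Subgroup G) := fun A => (σ A).2
  have hle : ∀ {A B : Finset (Fin n)}, ι A ≤ ι B ↔ A ⊆ B := fun {A B} =>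
    Subtype.coe_le_coe.trans σ.le_iff_le
  have hιsymm : ∀ (K : Subgroup G) (hK : K ∈ Set.Icc H (⊤ : Subgroup G)),
      ι (σ.symm ⟨K, hK⟩) = K := by
    intro K hK
    simp only [ι, OrderIso.apply_symm_apply]
  have hbot : ι ∅ = H := by
    have hHmem : H ∈ Set.Icc H (⊤ : Subgroup G) := ⟨le_refl H, le_top⟩
    have h2 : σ.symm ⟨H, hHmem⟩ = ∅ := by
      refine Finset.subset_empty.mp (hle.mp ?_)
      rw [hιsymm H hHmem]
      exact (hmem ∅).1
    rw [← h2, hιsymm H hHmem]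
  have hrange : Set.Icc H (⊤ : Subgroup G) = Set.range ι := by
    ext K
    constructor
    · intro hK
      exact ⟨σ.symm ⟨K, hK⟩, hιsymm K hK⟩
    · rintro ⟨A, rfl⟩
      exact hmem A
  have hIcc : ∀ A : Finset (Fin n), Set.Icc H (ι A) = ι '' ↑A.powerset := by
    intro A
    ext K
    constructor
    · rintro ⟨h1, h2⟩
      have hK : K ∈ Set.Icc H (⊤ : Subgroup G) := ⟨h1, le_top⟩
      refine ⟨σ.symm ⟨K, hK⟩, ?_, hιsymm K hK⟩
      rw [Finset.mem_coe, Finset.mem_powerset]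
      apply hle.mp
      rw [hιsymm K hK]
      exact h2
    · rintro ⟨B, hB, rfl⟩
      rw [Finset.mem_coe, Finset.mem_powerset] at hB
      exact ⟨(hmem B).1, hle.mpr hB⟩
  -- the recursion for μ transferred to finsets
  have hrec : ∀ A : Finset (Fin n), A.Nonempty → ∑ B ∈ A.powerset, μ (ι B) = 0 := by
    intro A hA
    have hHlt : H < ι A := by
      rw [← hbot]
      exact lt_of_le_of_ne (hle.mpr (Finset.empty_subset A))
        (fun h => hA.ne_empty (hinj h).symm)
    have h := hμ (ι A) hHlt
    rwa [hIcc A, finsum_mem_image hinj.injOn, finsum_mem_coe_finset] at h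
  -- μ is the alternating sign function
  have hν : ∀ A : Finset (Fin n), μ (ι A) = (-1 : ℤ) ^ A.card := by
    intro A
    induction A using Finset.strongInduction with
    | _ A ih =>
      rcases A.eq_empty_or_nonempty with rfl | hA
      · simpa [hbot] using hμH
      · have h0 := hrec A hA
        have h1 := Finset.sum_powerset_neg_one_pow_card_of_nonempty hA
        rw [← Finset.add_sum_erase _ _ (Finset.mem_powerset_self A)] at h0 h1
        have h2 : ∑ B ∈ A.powerset.erase A, μ (ι B)
            = ∑ B ∈ A.powerset.erase A, (-1 : ℤ) ^ B.card := by
          refine Finset.sum_congr rfl fun B hB => ?_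
          obtain ⟨hne, hsub⟩ := Finset.mem_erase.mp hB
          exact ih B (lt_of_le_of_ne (Finset.mem_powerset.mp hsub) hne)
        linarith
  -- the finset corresponding to the stabilizer S
  have hSmem : S ∈ Set.Icc H (⊤ : Subgroup G) := ⟨le_of_lt hlt, le_top⟩
  set T : Finset (Fin n) := σ.symm ⟨S, hSmem⟩ with hTdef
  have hT : ι T = S := hιsymm S hSmem
  have hTne : T.Nonempty := by
    rw [Finset.nonempty_iff_ne_empty]
    intro h
    exact ne_of_gt hlt (by rw [← hT, h, hbot])
  obtain ⟨t, ht⟩ := hTne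
  -- fixed spaces only depend on the union with T
  have hfix : ∀ A : Finset (Fin n), ρ.fixedBy (ι (A ∪ T)) = ρ.fixedBy (ι A) := by
    intro A
    refine le_antisymm (ρ.fixedBy_anti (hle.mpr Finset.subset_union_left)) ?_
    have hM : ι A ⊔ S ∈ Set.Icc H (⊤ : Subgroup G) := ⟨le_trans (hmem A).1 le_sup_left, le_top⟩
    have h2 : ι (σ.symm ⟨ι A ⊔ S, hM⟩) = ι A ⊔ S := hιsymm _ hM
    have h1 : ι (A ∪ T) ≤ ι A ⊔ S := by
      rw [← h2]
      apply hle.mpr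
      apply Finset.union_subset
      · exact hle.mp (by rw [h2]; exact le_sup_left)
      · exact hle.mp (by rw [h2, hT]; exact le_sup_right)
    calc ρ.fixedBy (ι A) = ρ.fixedBy (ι A ⊔ S) := (ρ.fixedBy_sup_stabilizer (hmem A).1).symm
      _ ≤ ρ.fixedBy (ι (A ∪ T)) := ρ.fixedBy_anti h1
  -- rewrite the finsum as a sum over all finsets
  rw [hrange, finsum_mem_range hinj, finsum_eq_sum_of_fintype]
  refine Finset.sum_ninvolution (fun A => if t ∈ A then A.erase t else insert t A)
    ?_ ?_ (fun A => Finset.mem_univ _) ?_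
  · intro A
    set B := if t ∈ A then A.erase t else insert t A with hB
    have hunion : B ∪ T = A ∪ T := by
      ext x
      by_cases h : t ∈ A <;>
        simp only [hB, if_pos, if_neg, h, if_true, if_false, Finset.mem_union,
          Finset.mem_erase, Finset.mem_insert] <;>
      · by_cases hx : x = t
        · subst hx; simp [ht, h]
        · simp [hx]
    have hfeq : ρ.fixedBy (ι B) = ρ.fixedBy (ι A) := by
      rw [← hfix B, ← hfix A, hunion]
    have hcard : B.card + 1 = A.card ∨ A.card + 1 = B.card := by
      by_cases h : t ∈ A
      · left
        rw [hB, if_pos h]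
        exact Finset.card_erase_add_one h
      · right
        rw [hB, if_neg h, Finset.card_insert_of_notMem h]
    rw [hν A, hν B, hfeq]
    rcases hcard with h | h
    · rw [← h, pow_succ]; ring
    · rw [← h, pow_succ]; ring
  · intro A _
    by_cases h : t ∈ A
    · simp only [if_pos h]
      exact fun heq => Finset.notMem_erase t A (by rw [heq]; exact h)
    · simp only [if_neg h]
      exact fun heq => h (by rw [← heq]; exact Finset.mem_insert_self t A)
  · intro A
    by_cases h : t ∈ A
    · rw [if_pos h, if_neg (Finset.notMem_erase t A), Finset.insert_erase h]
    · rw [if_neg h, if_pos (Finset.mem_insert_self t A), Finset.erase_insert h]
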